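/- Let B = ℂ[u]⋊Γ, let [B,B] denote the ℂ-linear span of the commutators {xy − yx : x, y ∈ B}, and let W denote the ℂ-linear span of {u^{dk} : k ≥ 0} ∪ {ξ^i : 0 ≤ i ≤ d−1} (i.e. the sum of the invariant polynomial subalgebra ℂ[u]^Γ = ℂ[u^d] and the group algebra ℂ[Γ] inside B). Then B = W ⊕ [B,B] as ℂ-vector spaces; in particular the zeroth cyclic homology HC₀(B) = B/[B,B] is linearly isomorphic to ℂ[u]^Γ + ℂ[Γ]. -/

import Mathlib

/-!
STATEMENT 6: Let `B = ℂ[u] ⋊ Γ` (the subspace of `A = ℂ[u^{±1}] ⋊ Γ` spanned by the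
`u^j ξ^i` with `j ≥ 0`), let `[B,B]` be the ℂ-span of commutators of elements of `B`,
and let `W` be the ℂ-span of `{u^{dk} : k ≥ 0} ∪ {ξ^i : 0 ≤ i ≤ d−1}` (the sum of
`ℂ[u]^Γ = ℂ[u^d]` and `ℂ[Γ]`).  Then `B = W ⊕ [B,B]` as ℂ-vector spaces.
-/

/-- Data exhibiting `A` as the skew group algebra `ℂ[u^{±1}] ⋊ (ℤ/dℤ)`,
where `b j i` represents the basis element `u^j ξ^i`. -/
structure SkewLaurentAlgebra (d : ℕ) (ζ : ℂ) (A : Type) [Ring A] [Algebra ℂ A] where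
  b : ℤ → ZMod d → A
  basis : Module.Basis (ℤ × ZMod d) ℂ A
  basis_eq : ∀ (j : ℤ) (i : ZMod d), basis (j, i) = b j i
  b_one : b 0 0 = 1
  b_mul : ∀ (j₁ j₂ : ℤ) (i₁ i₂ : ZMod d),
    b j₁ i₁ * b j₂ i₂ = (ζ ^ ((i₁.val : ℤ) * j₂)) • b (j₁ + j₂) (i₁ + i₂)

theorem stmt_6 (d : ℕ) (hd : 0 < d) (ζ : ℂ) (hζ : IsPrimitiveRoot ζ d)
    (A : Type) [Ring A] [Algebra ℂ A] (S : SkewLaurentAlgebra d ζ A)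
    (B W C : Submodule ℂ A)
    (hB : B = Submodule.span ℂ {x : A | ∃ (j : ℤ) (i : ZMod d), 0 ≤ j ∧ x = S.b j i})
    (hW : W = Submodule.span ℂ
        ({x : A | ∃ k : ℕ, x = S.b ((d : ℤ) * k) 0}
          ∪ {x : A | ∃ i : ZMod d, x = S.b 0 i}))
    (hC : C = Submodule.span ℂ {x : A | ∃ y ∈ B, ∃ z ∈ B, x = y * z - z * y}) :
    B = W ⊔ C ∧ W ⊓ C = ⊥ := by
  haveI : NeZero d := ⟨hd.ne'⟩
  have hζ0 : ζ ≠ 0 := by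
    intro h
    have h1 := hζ.pow_eq_one
    rw [h, zero_pow hd.ne'] at h1
    exact one_ne_zero h1.symm
  -- equality of integer powers of ζ follows from congruence mod d
  have hzeq : ∀ m n : ℤ, (d : ℤ) ∣ (m - n) → ζ ^ m = ζ ^ n := by
    rintro m n ⟨t, ht⟩
    have hm : m = n + (d : ℤ) * t := by linarith
    rw [hm, zpow_add₀ hζ0, zpow_mul]
    have : ζ ^ (d : ℤ) = 1 := by
      rw [zpow_natCast, hζ.pow_eq_one]
    rw [this, one_zpow, mul_one]
  have hvals : ∀ i₁ i₂ : ZMod d, i₁ + i₂ = 0 → (d : ℤ) ∣ ((i₁.val : ℤ) + (i₂.val : ℤ)) := by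
    intro i₁ i₂ h
    have h0 : ((i₁.val + i₂.val : ℕ) : ZMod d) = 0 := by
      push_cast
      rw [ZMod.natCast_val, ZMod.natCast_val, ZMod.cast_id, ZMod.cast_id, h]
    have := (ZMod.natCast_eq_zero_iff _ d).mp h0
    exact_mod_cast Int.natCast_dvd_natCast.mpr this
  -- commutator formula
  have hcomm : ∀ (j₁ j₂ : ℤ) (i₁ i₂ : ZMod d),
      S.b j₁ i₁ * S.b j₂ i₂ - S.b j₂ i₂ * S.b j₁ i₁ =
        (ζ ^ ((i₁.val : ℤ) * j₂) - ζ ^ ((i₂.val : ℤ) * j₁)) • S.b (j₁ + j₂) (i₁ + i₂) := by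
    intro j₁ j₂ i₁ i₂
    rw [S.b_mul, S.b_mul, add_comm j₂ j₁, add_comm i₂ i₁, sub_smul]
  -- index sets
  set TW : Set (ℤ × ZMod d) :=
    {p | (∃ k : ℕ, p = ((d : ℤ) * k, 0)) ∨ (∃ i : ZMod d, p = (0, i))} with hTW
  set TC : Set (ℤ × ZMod d) := {p | 0 < p.1 ∧ ¬(p.2 = 0 ∧ (d : ℤ) ∣ p.1)} with hTC
  set TB : Set (ℤ × ZMod d) := {p | 0 ≤ p.1} with hTB
  -- the spanning sets are images of the basis
  have hBimg : B = Submodule.span ℂ (⇑S.basis '' TB) := by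
    rw [hB]; congr 1; ext x
    constructor
    · rintro ⟨j, i, hj, rfl⟩
      exact ⟨(j, i), hj, S.basis_eq j i⟩
    · rintro ⟨⟨j, i⟩, hj, rfl⟩
      exact ⟨j, i, hj, S.basis_eq j i⟩
  have hWimg : W = Submodule.span ℂ (⇑S.basis '' TW) := by
    rw [hW]; congr 1; ext x
    constructor
    · rintro (⟨k, rfl⟩ | ⟨i, rfl⟩)
      · exact ⟨((d : ℤ) * k, 0), Or.inl ⟨k, rfl⟩, S.basis_eq _ _⟩
      · exact ⟨(0, i), Or.inr ⟨i, rfl⟩, S.basis_eq _ _⟩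
    · rintro ⟨p, (⟨k, rfl⟩ | ⟨i, rfl⟩), rfl⟩
      · exact Or.inl ⟨k, S.basis_eq _ _⟩
      · exact Or.inr ⟨i, S.basis_eq _ _⟩
  set M : Submodule ℂ A := Submodule.span ℂ (⇑S.basis '' TC) with hM
  -- membership of generators of B in B
  have hgenB : ∀ (j : ℤ) (i : ZMod d), 0 ≤ j → S.b j i ∈ B := by
    intro j i hj
    rw [hB]
    exact Submodule.subset_span ⟨j, i, hj, rfl⟩
  -- key: commutators of generators lie in M
  have key : ∀ (j₁ j₂ : ℤ) (i₁ i₂ : ZMod d), 0 ≤ j₁ → 0 ≤ j₂ →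
      S.b j₁ i₁ * S.b j₂ i₂ - S.b j₂ i₂ * S.b j₁ i₁ ∈ M := by
    intro j₁ j₂ i₁ i₂ hj₁ hj₂
    rw [hcomm]
    by_cases hp : ((j₁ + j₂, i₁ + i₂) : ℤ × ZMod d) ∈ TC
    · exact Submodule.smul_mem _ _
        (Submodule.subset_span ⟨(j₁ + j₂, i₁ + i₂), hp, S.basis_eq _ _⟩)
    · have hzero : ζ ^ ((i₁.val : ℤ) * j₂) - ζ ^ ((i₂.val : ℤ) * j₁) = 0 := by
        rw [hTC] at hp
        simp only [Set.mem_setOf_eq] at hp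
        by_cases hJ : 0 < j₁ + j₂
        · have hbc : i₁ + i₂ = 0 ∧ (d : ℤ) ∣ (j₁ + j₂) := by
            by_contra h
            exact hp ⟨hJ, h⟩
          obtain ⟨hI, a, ha⟩ := hbc
          obtain ⟨c, hc⟩ := hvals i₁ i₂ hI
          have hdiff : (d : ℤ) ∣ ((i₁.val : ℤ) * j₂ - (i₂.val : ℤ) * j₁) := by
            refine ⟨(i₁.val : ℤ) * a - c * j₁, ?_⟩
            linear_combination (i₁.val : ℤ) * ha - j₁ * hc
          rw [hzeq _ _ hdiff, sub_self]
        · have h1 : j₁ = 0 := by omega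
          have h2 : j₂ = 0 := by omega
          simp [h1, h2]
      rw [hzero, zero_smul]
      exact Submodule.zero_mem M
  -- every basis vector indexed by TC lies in C
  have hTCle : ∀ p ∈ TC, S.basis p ∈ C := by
    intro p hp
    rw [hTC] at hp
    simp only [Set.mem_setOf_eq] at hp
    obtain ⟨J, I⟩ := p
    obtain ⟨hJ, hni⟩ := hp
    simp only at hJ hni
    rw [S.basis_eq]
    by_cases hdJ : (d : ℤ) ∣ J
    · -- I ≠ 0 case
      have hI : I ≠ 0 := fun h => hni ⟨h, hdJ⟩
      have hIval : 0 < I.val :=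
        Nat.pos_of_ne_zero (fun h => hI ((ZMod.val_eq_zero I).mp h))
      have hIlt : I.val < d := ZMod.val_lt I
      have hcmp : S.b (J - 1) 0 * S.b 1 I - S.b 1 I * S.b (J - 1) 0 =
          (1 - ζ ^ ((I.val : ℤ) * (J - 1))) • S.b J I := by
        have h := hcomm (J - 1) 1 0 I
        have e : J - 1 + 1 = J := by ring
        rw [e] at h
        simpa using h
      have hcne : (1 : ℂ) - ζ ^ ((I.val : ℤ) * (J - 1)) ≠ 0 := by
        intro h
        have h1 : ζ ^ ((I.val : ℤ) * (J - 1)) = 1 := by linear_combination -h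
        have h2 : (d : ℤ) ∣ (I.val : ℤ) * (J - 1) := (hζ.zpow_eq_one_iff_dvd _).mp h1
        have h3 : (d : ℤ) ∣ (I.val : ℤ) * J := Dvd.dvd.mul_left hdJ _
        have h4 : (d : ℤ) ∣ (I.val : ℤ) := by
          have : (d : ℤ) ∣ ((I.val : ℤ) * J - (I.val : ℤ) * (J - 1)) := dvd_sub h3 h2
          simpa [mul_sub] using this
        have h5 : d ∣ I.val := by exact_mod_cast h4
        exact absurd (Nat.le_of_dvd hIval h5) (not_le.mpr hIlt)
      have hmem : S.b (J - 1) 0 * S.b 1 I - S.b 1 I * S.b (J - 1) 0 ∈ C := by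
        rw [hC]
        exact Submodule.subset_span
          ⟨S.b (J - 1) 0, hgenB _ _ (by omega), S.b 1 I, hgenB _ _ (by omega), rfl⟩
      have : S.b J I = (1 - ζ ^ ((I.val : ℤ) * (J - 1)))⁻¹ •
          (S.b (J - 1) 0 * S.b 1 I - S.b 1 I * S.b (J - 1) 0) := by
        rw [hcmp, smul_smul, inv_mul_cancel₀ hcne, one_smul]
      rw [this]
      exact Submodule.smul_mem _ _ hmem
    · -- d ∤ J case
      have hd2 : 1 < d := by
        have hne : d ≠ 1 := by
          rintro rfl
          exact hdJ (by simp)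
        omega
      haveI : Fact (1 < d) := ⟨hd2⟩
      have hval1 : ((1 : ZMod d)).val = 1 := ZMod.val_one d
      have hcmp : S.b 0 1 * S.b J (I - 1) - S.b J (I - 1) * S.b 0 1 =
          (ζ ^ J - 1) • S.b J I := by
        have h := hcomm 0 J 1 (I - 1)
        have e : 1 + (I - 1) = I := by ring
        rw [e] at h
        simpa [hval1] using h
      have hcne : ζ ^ J - 1 ≠ 0 := by
        intro h
        have h1 : ζ ^ J = 1 := by linear_combination h
        exact hdJ ((hζ.zpow_eq_one_iff_dvd _).mp h1)
      have hmem : S.b 0 1 * S.b J (I - 1) - S.b J (I - 1) * S.b 0 1 ∈ C := by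
        rw [hC]
        exact Submodule.subset_span
          ⟨S.b 0 1, hgenB _ _ le_rfl, S.b J (I - 1), hgenB _ _ (by omega), rfl⟩
      have : S.b J I = (ζ ^ J - 1)⁻¹ •
          (S.b 0 1 * S.b J (I - 1) - S.b J (I - 1) * S.b 0 1) := by
        rw [hcmp, smul_smul, inv_mul_cancel₀ hcne, one_smul]
      rw [this]
      exact Submodule.smul_mem _ _ hmem
  -- C = M
  have hCM : C = M := by
    apply le_antisymm
    · rw [hC]
      apply Submodule.span_le.mpr
      rintro x ⟨y, hy, z, hz, rfl⟩
      -- first reduce z to generators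
      rw [hB] at hz
      have hz' : z ∈ Submodule.comap (LinearMap.mulLeft ℂ y - LinearMap.mulRight ℂ y) M := by
        refine Submodule.span_le.mpr ?_ hz
        rintro _ ⟨j₂, i₂, hj₂, rfl⟩
        simp only [SetLike.mem_coe, Submodule.mem_comap, LinearMap.sub_apply,
          LinearMap.mulLeft_apply, LinearMap.mulRight_apply]
        -- now reduce y to generators
        rw [hB] at hy
        have hy' : y ∈ Submodule.comap
            (LinearMap.mulRight ℂ (S.b j₂ i₂) - LinearMap.mulLeft ℂ (S.b j₂ i₂)) M := by
          refine Submodule.span_le.mpr ?_ hy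
          rintro _ ⟨j₁, i₁, hj₁, rfl⟩
          simp only [SetLike.mem_coe, Submodule.mem_comap, LinearMap.sub_apply,
            LinearMap.mulLeft_apply, LinearMap.mulRight_apply]
          exact key j₁ j₂ i₁ i₂ hj₁ hj₂
        simpa using hy'
      simpa using hz'
    · apply Submodule.span_le.mpr
      rintro _ ⟨p, hp, rfl⟩
      exact hTCle p hp
  constructor
  · -- B = W ⊔ C
    have hsets : TW ∪ TC = TB := by
      ext ⟨j, i⟩
      simp only [hTW, hTC, hTB, Set.mem_union, Set.mem_setOf_eq, Prod.mk.injEq]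
      constructor
      · rintro ((⟨k, hk, hi⟩ | ⟨i', hj, hi⟩) | ⟨hj, _⟩)
        · rw [hk]; positivity
        · omega
        · omega
      · intro hj
        rcases eq_or_lt_of_le hj with h0 | h0
        · exact Or.inl (Or.inr ⟨i, h0.symm, rfl⟩)
        · by_cases hcond : i = 0 ∧ (d : ℤ) ∣ j
          · obtain ⟨hi, t, ht⟩ := hcond
            refine Or.inl (Or.inl ⟨t.toNat, ?_, hi⟩)
            have ht0 : 0 ≤ t := by nlinarith
            rw [ht, Int.toNat_of_nonneg ht0]
          · exact Or.inr ⟨h0, hcond⟩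
    rw [hBimg, hWimg, hCM, hM, ← Submodule.span_union, ← Set.image_union, hsets]
  · -- W ⊓ C = ⊥
    have hdisj : Disjoint TW TC := by
      rw [Set.disjoint_left]
      rintro p (⟨k, rfl⟩ | ⟨i', rfl⟩) ⟨hj, hni⟩
      · exact hni ⟨rfl, dvd_mul_right _ _⟩
      · simp at hj
    rw [hWimg, hCM, hM]
    exact (S.basis.linearIndependent.disjoint_span_image hdisj).eq_bot
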